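/- Let C_1, ..., C_t ⊆ F_q^n be linear codes of dimensions k_1, ..., k_t, all with full support, and suppose k_1 + ... + k_t > n. Then there exist codewords c_i ∈ C_i such that the componentwise product c_1 * c_2 * ... * c_t has Hamming weight w satisfying 1 ≤ w ≤ t - 1. -/

import Mathlib

noncomputable section

/-- The componentwise product code of two linear codes. -/
def prodCode (F : Type*) [Field F] {n : ℕ}
    (C C' : Submodule F (Fin n → F)) : Submodule F (Fin n → F) :=
  Submodule.span F {z | ∃ c ∈ C, ∃ c' ∈ C', z = c * c'}

/-- The t-fold componentwise power of a code (convention: 0th power is ⊤). -/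
def powCode (F : Type*) [Field F] {n : ℕ} (C : Submodule F (Fin n → F)) :
    ℕ → Submodule F (Fin n → F)
  | 0 => ⊤
  | 1 => C
  | (t+2) => prodCode F (powCode F C (t+1)) C

/-- Minimum distance: minimum Hamming weight of a nonzero codeword. -/
def dmin {F : Type*} [Field F] [DecidableEq F] {n : ℕ}
    (C : Submodule F (Fin n → F)) : ℕ :=
  sInf {w | ∃ c ∈ C, c ≠ 0 ∧ hammingNorm c = w}

/-- The dual code with respect to the standard bilinear form. -/
def dualCode (F : Type*) [Field F] {n : ℕ}
    (C : Submodule F (Fin n → F)) : Submodule F (Fin n → F) where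
  carrier := {x | ∀ c ∈ C, ∑ i, x i * c i = 0}
  zero_mem' := by intro c hc; simp
  add_mem' := by
    intro a b ha hb c hc
    have h : ∑ i, (a + b) i * c i = (∑ i, a i * c i) + ∑ i, b i * c i := by
      simp [add_mul, Finset.sum_add_distrib]
    simp only [Set.mem_setOf_eq] at *
    rw [h, ha c hc, hb c hc, add_zero]
  smul_mem' := by
    intro r a ha c hc
    simp only [Pi.smul_apply, smul_eq_mul, mul_assoc, ← Finset.mul_sum, Set.mem_setOf_eq] at *
    rw [ha c hc, mul_zero]

/-- A code has full support if every coordinate carries a nonzero codeword value. -/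
def fullSupport (F : Type*) [Field F] {n : ℕ} (C : Submodule F (Fin n → F)) : Prop :=
  ∀ j, ∃ c ∈ C, c j ≠ 0

/-- Product code of a family of codes. -/
def prodFamily (F : Type*) [Field F] {n t : ℕ}
    (C : Fin t → Submodule F (Fin n → F)) : Submodule F (Fin n → F) :=
  Submodule.span F {z | ∃ c : Fin t → (Fin n → F), (∀ i, c i ∈ C i) ∧ z = ∏ i, c i}


namespace PSB
variable {F : Type*} [Field F] [DecidableEq F] {n : ℕ}

lemma hnorm_congr (x y : Fin n → F) (h : ∀ j, x j ≠ 0 ↔ y j ≠ 0) :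
    hammingNorm x = hammingNorm y := by
  unfold hammingNorm; congr 1; apply Finset.filter_congr; intro j _; exact h j

lemma hnorm_le (x y : Fin n → F) (h : ∀ j, x j ≠ 0 → y j ≠ 0) :
    hammingNorm x ≤ hammingNorm y := by
  apply Finset.card_le_card
  intro j hj
  simp only [Finset.mem_filter, Finset.mem_univ, true_and] at hj ⊢
  exact h j hj

lemma hnorm_le_card (x : Fin n → F) (S : Finset (Fin n)) (h : ∀ j, x j ≠ 0 → j ∈ S) :
    hammingNorm x ≤ S.card := by
  apply Finset.card_le_card
  intro j hj
  simp only [Finset.mem_filter, Finset.mem_univ, true_and] at hj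
  exact h j hj

lemma finrank_le_card (C : Submodule F (Fin n → F)) (R : Finset (Fin n))
    (h : ∀ c ∈ C, (∀ r ∈ R, c r = 0) → c = 0) :
    Module.finrank F C ≤ R.card := by
  classical
  set φ := (LinearMap.funLeft F F (fun r : ↥R => (r : Fin n))).comp C.subtype with hφ
  have hinj : Function.Injective φ := by
    rw [injective_iff_map_eq_zero]
    intro a ha
    have h0 : ∀ r ∈ R, (a : Fin n → F) r = 0 := by
      intro r hr
      have := congrFun ha ⟨r, hr⟩
      simpa [hφ, LinearMap.funLeft_apply] using this
    exact Subtype.ext (h _ a.2 h0)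
  have := LinearMap.finrank_le_finrank_of_injective hinj
  simpa [Module.finrank_fintype_fun_eq_card, Fintype.card_coe] using this

lemma finrank_shorten (C : Submodule F (Fin n → F)) (j₀ : Fin n)
    (h : ∃ c ∈ C, c j₀ ≠ 0) :
    Module.finrank F ↥(C ⊓ LinearMap.ker (LinearMap.proj j₀)) + 1 = Module.finrank F C := by
  classical
  set ψ : ↥C →ₗ[F] F := (LinearMap.proj (φ := fun _ : Fin n => F) j₀).comp C.subtype with hψ
  have hrange : LinearMap.range ψ = ⊤ := by
    obtain ⟨c, hc, hcj⟩ := h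
    rw [LinearMap.range_eq_top]
    intro a
    refine ⟨⟨(a * (c j₀)⁻¹) • c, Submodule.smul_mem _ _ hc⟩, ?_⟩
    show ((a * (c j₀)⁻¹) • c) j₀ = a
    simp only [Pi.smul_apply, smul_eq_mul]
    field_simp
  have hker : Module.finrank F ↥(LinearMap.ker ψ)
      = Module.finrank F ↥(C ⊓ LinearMap.ker (LinearMap.proj j₀)) := by
    have heq : LinearMap.ker ψ
        = Submodule.comap C.subtype (C ⊓ LinearMap.ker (LinearMap.proj j₀)) := by
      ext x
      simp only [LinearMap.mem_ker, Submodule.mem_comap, Submodule.mem_inf, hψ,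
        LinearMap.comp_apply, Submodule.coe_subtype]
      constructor
      · intro hx; exact ⟨x.2, hx⟩
      · intro hx; exact hx.2
    rw [heq]
    exact (Submodule.comapSubtypeEquivOfLe inf_le_left).finrank_eq
  have hrn := LinearMap.finrank_range_add_finrank_ker ψ
  rw [hrange, finrank_top, Module.finrank_self, hker] at hrn
  omega

lemma finrank_map_eq_of_inj (C : Submodule F (Fin n → F)) (π : (Fin n → F) →ₗ[F] (Fin n → F))
    (h : ∀ c ∈ C, π c = 0 → c = 0) :
    Module.finrank F ↥(C.map π) = Module.finrank F ↥C := by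
  set φ := π.comp C.subtype with hφ
  have hker : LinearMap.ker φ = ⊥ := by
    rw [LinearMap.ker_eq_bot']
    intro m hm
    exact Subtype.ext (h _ m.2 hm)
  have hrange : LinearMap.range φ = C.map π := by
    rw [hφ, LinearMap.range_comp, Submodule.range_subtype]
  have hrn := LinearMap.finrank_range_add_finrank_ker φ
  rw [hrange, hker, finrank_bot] at hrn
  omega

lemma reps_aux {α : Type*} [DecidableEq α] (P : α → α → Prop)
    [inst : ∀ j, DecidablePred (P j)]
    (hrefl : ∀ j, P j j) (hsymm : ∀ a b, P a b → P b a)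
    (htrans : ∀ a b c, P a b → P b c → P a c) (b : ℕ) :
    ∀ (s : ℕ) (S : Finset α), S.card ≤ s →
      (∀ j ∈ S, b ≤ (S.filter (fun y => P j y)).card) →
      ∃ R : Finset α, (∀ j ∈ S, ∃ r ∈ R, P r j) ∧ b * R.card ≤ S.card := by
  intro s
  induction s with
  | zero =>
    intro S hS _
    have : S = ∅ := Finset.card_eq_zero.mp (Nat.le_zero.mp hS)
    subst this
    exact ⟨∅, by simp, by simp⟩
  | succ s ih =>
    intro S hS hP
    rcases S.eq_empty_or_nonempty with rfl | ⟨j₀, hj₀⟩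
    · exact ⟨∅, by simp, by simp⟩
    · set D := S.filter (fun y => P j₀ y) with hD
      have hj₀D : j₀ ∈ D := Finset.mem_filter.mpr ⟨hj₀, hrefl j₀⟩
      set S' := S \ D with hS'
      have hDsub : D ⊆ S := Finset.filter_subset _ _
      have hcard' : S'.card = S.card - D.card := Finset.card_sdiff_of_subset hDsub
      have hDle : D.card ≤ S.card := Finset.card_le_card hDsub
      have hDpos : 0 < D.card := Finset.card_pos.mpr ⟨j₀, hj₀D⟩
      have hfilter : ∀ j ∈ S', S'.filter (fun y => P j y) = S.filter (fun y => P j y) := by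
        intro j hj
        have hjS : j ∈ S := (Finset.mem_sdiff.mp hj).1
        have hjD : j ∉ D := (Finset.mem_sdiff.mp hj).2
        apply Finset.ext
        intro y
        simp only [hS', Finset.mem_filter, Finset.mem_sdiff]
        constructor
        · rintro ⟨⟨hyS, _⟩, hPy⟩; exact ⟨hyS, hPy⟩
        · rintro ⟨hyS, hPy⟩
          refine ⟨⟨hyS, fun hyD => ?_⟩, hPy⟩
          have h1 : P j₀ y := (Finset.mem_filter.mp hyD).2
          have h2 : P j₀ j := htrans _ _ _ h1 (hsymm _ _ hPy)
          exact hjD (Finset.mem_filter.mpr ⟨hjS, h2⟩)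
      have hP' : ∀ j ∈ S', b ≤ (S'.filter (fun y => P j y)).card := by
        intro j hj
        rw [hfilter j hj]
        exact hP j (Finset.mem_sdiff.mp hj).1
      have hS'le : S'.card ≤ s := by omega
      obtain ⟨R', hcov', hsize'⟩ := ih S' hS'le hP'
      refine ⟨insert j₀ R', ?_, ?_⟩
      · intro j hj
        by_cases hjD : j ∈ D
        · exact ⟨j₀, Finset.mem_insert_self _ _, (Finset.mem_filter.mp hjD).2⟩
        · obtain ⟨r, hr, hPr⟩ := hcov' j (Finset.mem_sdiff.mpr ⟨hj, hjD⟩)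
          exact ⟨r, Finset.mem_insert_of_mem hr, hPr⟩
      · have hbD : b ≤ D.card := hP j₀ hj₀
        have hins : (insert j₀ R').card ≤ R'.card + 1 := Finset.card_insert_le _ _
        have h3 : b * (insert j₀ R').card ≤ b * R'.card + b := by
          calc b * (insert j₀ R').card ≤ b * (R'.card + 1) := Nat.mul_le_mul_left _ hins
            _ = b * R'.card + b := by ring
        omega

lemma psb : ∀ (s : ℕ) (S : Finset (Fin n)), S.card ≤ s → S.Nonempty →
    ∀ (t : ℕ), 0 < t → ∀ (C : Fin t → Submodule F (Fin n → F)),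
    (∀ i, ∀ c ∈ C i, ∀ j, j ∉ S → c j = 0) →
    (∀ i, ∀ j ∈ S, ∃ c ∈ C i, c j ≠ 0) →
    ∃ c : Fin t → (Fin n → F), (∀ i, c i ∈ C i) ∧
      1 ≤ hammingNorm (∏ i, c i) ∧
      hammingNorm (∏ i, c i) ≤ max (t - 1) (S.card + t - ∑ i, Module.finrank F (C i)) := by
  intro s
  induction s with
  | zero =>
    intro S hS hne
    exact absurd (Finset.card_pos.mpr hne) (by omega)
  | succ s ih =>
    intro S hScard hSne t ht C hsupp hfull
    classical
    set K := ∑ i, Module.finrank F (C i) with hK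
    set B := max (t - 1) (S.card + t - K) with hB
    by_cases hW : ∃ i, ∃ w, w ∈ C i ∧ w ≠ 0 ∧ hammingNorm w ≤ B
    · -- Case W : some code has a short nonzero word
      obtain ⟨i, w, hwC, hw0, hwB⟩ := hW
      obtain ⟨x, hx⟩ : ∃ x, w x ≠ 0 := by
        by_contra h; push_neg at h; exact hw0 (funext h)
      have hxS : x ∈ S := by
        by_contra hxS; exact hx (hsupp i w hwC x hxS)
      have hch : ∀ l : Fin t, ∃ v, v ∈ C l ∧ v x ≠ 0 := by
        intro l; obtain ⟨v, hv, hvx⟩ := hfull l x hxS; exact ⟨v, hv, hvx⟩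
      choose f hfC hfx using hch
      set c : Fin t → (Fin n → F) := Function.update f i w with hc
      have hcC : ∀ l, c l ∈ C l := by
        intro l
        rcases eq_or_ne l i with rfl | hne
        · simpa [hc] using hwC
        · simpa [hc, Function.update_apply, hne] using hfC l
      have hcx : ∀ l, c l x ≠ 0 := by
        intro l
        rcases eq_or_ne l i with rfl | hne
        · simpa [hc] using hx
        · simpa [hc, Function.update_apply, hne] using hfx l
      have hprodx : (∏ l, c l) x ≠ 0 := by
        rw [Finset.prod_apply]
        exact Finset.prod_ne_zero_iff.mpr (fun l _ => hcx l)
      refine ⟨c, hcC, ?_, ?_⟩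
      · have hne0 : (∏ l, c l) ≠ 0 := fun h => hprodx (by rw [h]; rfl)
        exact hammingNorm_pos_iff.mpr hne0
      · refine le_trans (hnorm_le _ w ?_) hwB
        intro j hj
        intro hwj
        apply hj
        rw [Finset.prod_apply]
        refine Finset.prod_eq_zero (Finset.mem_univ i) ?_
        simpa [hc] using hwj
    · -- no short words anywhere
      have hBS : B + 1 ≤ S.card := by
        by_contra h
        obtain ⟨j, hj⟩ := hSne
        obtain ⟨w, hwC, hwj⟩ := hfull ⟨0, ht⟩ j hj
        have hw0 : w ≠ 0 := fun h0 => hwj (by rw [h0]; rfl)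
        have hwcard : hammingNorm w ≤ S.card := by
          apply hnorm_le_card
          intro y hy
          by_contra hyS
          exact hy (hsupp _ w hwC y hyS)
        exact hW ⟨⟨0, ht⟩, w, hwC, hw0, by omega⟩
      set PP : Fin t → Fin n → Fin n → Prop :=
        fun i j₀ j => ∃ l : F, l ≠ 0 ∧ ∀ c ∈ C i, c j = l * c j₀ with hPP
      have hrefl : ∀ i j, PP i j j :=
        fun i j => ⟨1, one_ne_zero, fun c _ => (one_mul _).symm⟩
      have hsymm : ∀ i a b, PP i a b → PP i b a := by
        rintro i a b ⟨l, hl, h⟩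
        refine ⟨l⁻¹, inv_ne_zero hl, fun c hc => ?_⟩
        rw [h c hc]
        field_simp
      have htrans : ∀ i a b c, PP i a b → PP i b c → PP i a c := by
        rintro i a b c ⟨l, hl, h⟩ ⟨m, hm, h'⟩
        refine ⟨m * l, mul_ne_zero hm hl, fun x hx => ?_⟩
        rw [h' x hx, h x hx]
        ring
      by_cases hR : ∃ i₀, ∃ j₀ ∈ S, (S.filter (fun j => PP i₀ j₀ j)).card ≤ B
      · -- Case R : reduction, delete a small proportionality class
        obtain ⟨i₀, j₀, hj₀S, hDB⟩ := hR
        set D := S.filter (fun j => PP i₀ j₀ j) with hDdef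
        have hj₀D : j₀ ∈ D := Finset.mem_filter.mpr ⟨hj₀S, hrefl i₀ j₀⟩
        have hDS : D ⊆ S := Finset.filter_subset _ _
        have hDpos : 0 < D.card := Finset.card_pos.mpr ⟨j₀, hj₀D⟩
        have hDle : D.card ≤ S.card := Finset.card_le_card hDS
        set S' := S \ D with hS'def
        have hS'card : S'.card = S.card - D.card := Finset.card_sdiff_of_subset hDS
        have hS'le : S'.card ≤ s := by omega
        have hS'ne : S'.Nonempty := by
          rw [← Finset.card_pos]
          omega
        set π : (Fin n → F) →ₗ[F] (Fin n → F) :=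
          { toFun := fun c j => if j ∈ D then 0 else c j
            map_add' := by intro a b; funext j; by_cases h : j ∈ D <;> simp [h]
            map_smul' := by intro m a; funext j; by_cases h : j ∈ D <;> simp [h] } with hπ
        have hπ_apply : ∀ (c : Fin n → F) j, π c j = if j ∈ D then 0 else c j := fun _ _ => rfl
        set Csh : Submodule F (Fin n → F) := C i₀ ⊓ LinearMap.ker (LinearMap.proj j₀) with hCshdef
        have hDzero : ∀ c ∈ C i₀, c j₀ = 0 → ∀ j ∈ D, c j = 0 := by
          intro c hc hcj j hj
          obtain ⟨l, hl, h⟩ := (Finset.mem_filter.mp hj).2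
          rw [h c hc, hcj, mul_zero]
        set Cm : Fin t → Submodule F (Fin n → F) := fun i => if i = i₀ then Csh else C i with hCm
        set C' : Fin t → Submodule F (Fin n → F) := fun i => (Cm i).map π with hC'
        have hCmle : ∀ i, Cm i ≤ C i := by
          intro i
          by_cases h : i = i₀
          · subst h; rw [hCm]; simp only [if_pos rfl]; exact inf_le_left
          · rw [hCm]; simp only [if_neg h]; exact le_rfl
        have hCm₀ : Cm i₀ = Csh := by rw [hCm]; simp
        have hinj : ∀ i, ∀ c ∈ Cm i, π c = 0 → c = 0 := by
          intro i c hc h0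
          have hcC : c ∈ C i := hCmle i hc
          have hoff : ∀ j, j ∉ D → c j = 0 := by
            intro j hj
            have := congrFun h0 j
            simpa [hπ_apply, hj] using this
          by_contra hne
          apply hW
          refine ⟨i, c, hcC, hne, ?_⟩
          refine le_trans (hnorm_le_card c D ?_) hDB
          intro j hj
          by_contra hjD
          exact hj (hoff j hjD)
        have hfr : ∀ i, i ≠ i₀ → Module.finrank F (C' i) = Module.finrank F (C i) := by
          intro i hi
          have hCmi : Cm i = C i := by rw [hCm]; simp [hi]
          have e : C' i = Submodule.map π (C i) := by rw [hC']; simp only []; rw [hCmi]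
          rw [e]
          exact finrank_map_eq_of_inj (C i) π (fun c hc h0 => hinj i c (hCmi ▸ hc) h0)
        have hk₀ : Module.finrank F Csh + 1 = Module.finrank F (C i₀) :=
          finrank_shorten (C i₀) j₀ (hfull i₀ j₀ hj₀S)
        have hfr₀ : Module.finrank F (C' i₀) = Module.finrank F Csh := by
          have e : C' i₀ = Submodule.map π Csh := by rw [hC']; simp only []; rw [hCm₀]
          rw [e]
          exact finrank_map_eq_of_inj Csh π (fun c hc h0 => hinj i₀ c (hCm₀.symm ▸ hc) h0)
        have hK' : (∑ i, Module.finrank F (C' i)) + 1 = K := by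
          rw [hK]
          rw [← Finset.sum_erase_add Finset.univ _ (Finset.mem_univ i₀),
            ← Finset.sum_erase_add Finset.univ (fun i => Module.finrank F (C i)) (Finset.mem_univ i₀)]
          have hsum : ∑ i ∈ Finset.univ.erase i₀, Module.finrank F (C' i)
              = ∑ i ∈ Finset.univ.erase i₀, Module.finrank F (C i) :=
            Finset.sum_congr rfl (fun i hi => hfr i (Finset.ne_of_mem_erase hi))
          rw [hsum, hfr₀]
          omega
        have hsupp' : ∀ i, ∀ c ∈ C' i, ∀ j, j ∉ S' → c j = 0 := by
          intro i c hc j hj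
          obtain ⟨v, hv, rfl⟩ := Submodule.mem_map.mp hc
          rw [hπ_apply]
          by_cases hjD : j ∈ D
          · simp [hjD]
          · simp only [if_neg hjD]
            have hjS : j ∉ S := by
              intro hjS
              exact hj (Finset.mem_sdiff.mpr ⟨hjS, hjD⟩)
            exact hsupp i v (hCmle i hv) j hjS
        have hfull' : ∀ i, ∀ j ∈ S', ∃ c ∈ C' i, c j ≠ 0 := by
          intro i j hj
          have hjS : j ∈ S := (Finset.mem_sdiff.mp hj).1
          have hjD : j ∉ D := (Finset.mem_sdiff.mp hj).2
          by_cases hi : i = i₀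
          · subst hi
            obtain ⟨cs, hcsC, hcsj₀⟩ := hfull i j₀ hj₀S
            by_cases hex : ∃ c ∈ C i, c j₀ = 0 ∧ c j ≠ 0
            · obtain ⟨c, hcC, hcj₀, hcj⟩ := hex
              refine ⟨π c, Submodule.mem_map.mpr ⟨c, ?_, rfl⟩, ?_⟩
              · rw [hCm₀, hCshdef]
                exact Submodule.mem_inf.mpr ⟨hcC, LinearMap.mem_ker.mpr hcj₀⟩
              · rw [hπ_apply]
                simpa [hjD] using hcj
            · exfalso
              apply hjD
              push_neg at hex
              have hprop : ∀ c ∈ C i, c j = (cs j * (cs j₀)⁻¹) * c j₀ := by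
                intro c hc
                have h1 : c - (c j₀ * (cs j₀)⁻¹) • cs ∈ C i :=
                  Submodule.sub_mem _ hc (Submodule.smul_mem _ _ hcsC)
                have h2 : (c - (c j₀ * (cs j₀)⁻¹) • cs) j₀ = 0 := by
                  simp only [Pi.sub_apply, Pi.smul_apply, smul_eq_mul]
                  field_simp
                  simp
                have h3 := hex _ h1 h2
                simp only [Pi.sub_apply, Pi.smul_apply, smul_eq_mul, sub_eq_zero] at h3
                rw [h3]
                ring
              have hlne : cs j * (cs j₀)⁻¹ ≠ 0 := by
                intro h0
                obtain ⟨v, hvC, hvj⟩ := hfull i j hjS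
                rw [hprop v hvC, h0, zero_mul] at hvj
                exact hvj rfl
              exact Finset.mem_filter.mpr ⟨hjS, ⟨_, hlne, hprop⟩⟩
          · obtain ⟨c, hcC, hcj⟩ := hfull i j hjS
            refine ⟨π c, Submodule.mem_map.mpr ⟨c, ?_, rfl⟩, ?_⟩
            · rw [hCm]; simpa [hi] using hcC
            · rw [hπ_apply]
              simpa [hjD] using hcj
        obtain ⟨c', hc'C, hc'1, hc'B⟩ := ih S' hS'le hS'ne t ht C' hsupp' hfull'
        have hlift : ∀ i, ∃ v, v ∈ Cm i ∧ π v = c' i := by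
          intro i
          obtain ⟨v, hv, hveq⟩ := Submodule.mem_map.mp (hc'C i)
          exact ⟨v, hv, hveq⟩
        choose v hvM hvπ using hlift
        have hvC : ∀ i, v i ∈ C i := fun i => hCmle i (hvM i)
        have hv₀D : ∀ j ∈ D, v i₀ j = 0 := by
          have hm : v i₀ ∈ Csh := hCm₀ ▸ hvM i₀
          have hm' := Submodule.mem_inf.mp (hCshdef ▸ hm)
          have h₀ : v i₀ j₀ = 0 := LinearMap.mem_ker.mp hm'.2
          exact fun j hj => hDzero (v i₀) hm'.1 h₀ j hj
        have hsuppeq : ∀ j, ((∏ i, v i) j ≠ 0) ↔ ((∏ i, c' i) j ≠ 0) := by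
          intro j
          by_cases hjD : j ∈ D
          · constructor
            · intro h
              exfalso
              apply h
              rw [Finset.prod_apply]
              exact Finset.prod_eq_zero (Finset.mem_univ i₀) (hv₀D j hjD)
            · intro h
              exfalso
              apply h
              rw [Finset.prod_apply]
              refine Finset.prod_eq_zero (Finset.mem_univ i₀) ?_
              rw [← hvπ i₀, hπ_apply]
              simp [hjD]
          · have heach : ∀ i, c' i j = v i j := by
              intro i
              rw [← hvπ i, hπ_apply]
              simp [hjD]
            rw [Finset.prod_apply, Finset.prod_apply]
            have hpe : ∏ i, v i j = ∏ i, c' i j :=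
              Finset.prod_congr rfl (fun i _ => (heach i).symm)
            rw [hpe]
        have hnormeq : hammingNorm (∏ i, v i) = hammingNorm (∏ i, c' i) :=
          hnorm_congr _ _ hsuppeq
        have hBB : max (t - 1) (S'.card + t - ∑ i, Module.finrank F (C' i)) ≤ B := by
          apply max_le
          · exact le_max_left _ _
          · refine le_trans ?_ (le_max_right (t-1) (S.card + t - K))
            omega
        exact ⟨v, hvC, by rw [hnormeq]; exact hc'1,
          by rw [hnormeq]; exact le_trans hc'B hBB⟩
      · -- Case C : contradiction via counting
        exfalso
        push_neg at hR
        have hki : ∀ i, (B + 1) * Module.finrank F (C i) ≤ S.card := by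
          intro i
          obtain ⟨R, hcov, hsize⟩ := reps_aux (PP i) (hrefl i) (hsymm i) (htrans i) (B+1)
            S.card S le_rfl (fun j hj => hR i j hj)
          have hfrle : Module.finrank F (C i) ≤ R.card := by
            apply finrank_le_card
            intro c hc hcr
            funext j
            show c j = 0
            by_cases hjS : j ∈ S
            · obtain ⟨r, hrR, hPr⟩ := hcov j hjS
              obtain ⟨l, hl, h⟩ := hPr
              rw [h c hc, hcr r hrR, mul_zero]
            · exact hsupp i c hc j hjS
          calc (B+1) * Module.finrank F (C i) ≤ (B+1) * R.card :=
                Nat.mul_le_mul_left _ hfrle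
            _ ≤ S.card := hsize
        have hsum : (B + 1) * K ≤ t * S.card := by
          rw [hK, Finset.mul_sum]
          calc ∑ i, (B+1) * Module.finrank F (C i) ≤ ∑ _i : Fin t, S.card :=
                Finset.sum_le_sum (fun i _ => hki i)
            _ = t * S.card := by
                rw [Finset.sum_const, Finset.card_univ, Fintype.card_fin, smul_eq_mul]
        have h1 : S.card + t ≤ B + K := by
          have h := le_max_right (t-1) (S.card + t - K)
          rw [← hB] at h
          omega
        have h2 : t ≤ B + 1 := by
          have h := le_max_left (t-1) (S.card + t - K)
          rw [← hB] at h
          omega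
        have key : ((B:ℤ) + 1 - t) * ((S.card : ℤ) - (B + 1)) ≥ 0 := by
          apply mul_nonneg
          · have : (t:ℤ) ≤ (B:ℤ) + 1 := by exact_mod_cast h2
            linarith
          · have : ((B:ℤ) + 1) ≤ (S.card : ℤ) := by exact_mod_cast hBS
            linarith
        have hsum' : ((B:ℤ) + 1) * K ≤ t * S.card := by exact_mod_cast hsum
        have h1' : (S.card : ℤ) + t ≤ B + K := by exact_mod_cast h1
        have ht' : (1:ℤ) ≤ t := by exact_mod_cast ht
        nlinarith [key, hsum', h1', ht']

end PSB

theorem stmt3 {F : Type*} [Field F] [Fintype F] [DecidableEq F] {n t : ℕ}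
    (C : Fin t → Submodule F (Fin n → F))
    (hfs : ∀ i, fullSupport F (C i))
    (hdim : n < ∑ i, Module.finrank F (C i)) :
    ∃ c : Fin t → (Fin n → F), (∀ i, c i ∈ C i) ∧
      1 ≤ hammingNorm (∏ i, c i) ∧ hammingNorm (∏ i, c i) ≤ t - 1 := by
  classical
  rcases Nat.eq_zero_or_pos t with rfl | ht
  · simp at hdim
  rcases Nat.eq_zero_or_pos n with rfl | hn
  · exfalso
    have hz : ∀ i, Module.finrank F (C i) = 0 := by
      intro i
      have h1 := Submodule.finrank_le (C i)
      rw [Module.finrank_fintype_fun_eq_card] at h1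
      simpa using h1
    simp [hz] at hdim
  have hne : (Finset.univ : Finset (Fin n)).Nonempty := ⟨⟨0, hn⟩, Finset.mem_univ _⟩
  obtain ⟨c, hcC, h1, h2⟩ := PSB.psb (F := F) (n := n) n Finset.univ
    (by simp) hne t ht C
    (fun i c hc j hj => absurd (Finset.mem_univ j) hj)
    (fun i j _ => hfs i j)
  refine ⟨c, hcC, h1, le_trans h2 ?_⟩
  have hcard : (Finset.univ : Finset (Fin n)).card = n := by simp
  apply max_le le_rfl
  rw [hcard]
  omega

end
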